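/- Let A be a finite commutative unitary ring with A ≠ {0} whose characteristic is different from 2. Then there exists an irreducible λ-quiddity over A of size at least max(4, car(A)), where car(A) denotes the characteristic of A, and every irreducible λ-quiddity over A has size at most |SL₂(A)|/(2|A|) + 2. -/

import Mathlib

/-- The matrix `[[a, -1], [1, 0]]`. -/
def mMat {A : Type*} [CommRing A] (a : A) : Matrix (Fin 2) (Fin 2) A := !![a, -1; 1, 0]

/-- `M_n(a₁, …, aₙ) = mMat aₙ * ⋯ * mMat a₁`, for the tuple given as a list `[a₁, …, aₙ]`. -/
def mProd {A : Type*} [CommRing A] (l : List A) : Matrix (Fin 2) (Fin 2) A :=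
  ((l.map mMat).reverse).prod

/-- The sum `(a₁,…,aₙ) ⊕ (b₁,…,b_m) = (a₁+b_m, a₂,…,a_{n−1}, aₙ+b₁, b₂,…,b_{m−1})`. -/
def oplus {A : Type*} [CommRing A] (a b : List A) : List A :=
  (a.headD 0 + b.getLastD 0) ::
    (a.dropLast.tail ++ (a.getLastD 0 + b.headD 0) :: b.dropLast.tail)

/-- Two tuples are equivalent if one is a cyclic rotation of the other or of its reversal. -/
def TupEquiv {A : Type*} (a b : List A) : Prop :=
  (∃ k, b = a.rotate k) ∨ (∃ k, b = a.reverse.rotate k)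

/-- A λ-quiddity over `R ⊆ A`: all entries lie in `R` and `M_n(a₁,…,aₙ) = ± Id`. -/
def IsQuiddity {A : Type*} [CommRing A] (R : Set A) (c : List A) : Prop :=
  (∀ x ∈ c, x ∈ R) ∧ (mProd c = 1 ∨ mProd c = -1)

/-- A λ-quiddity `c` over `R` is reducible if `c ∼ a ⊕ b` with `a ∈ R^m`, `m ≥ 3`,
and `b` a λ-quiddity over `R` of size `l ≥ 3`. -/
def IsReducible {A : Type*} [CommRing A] (R : Set A) (c : List A) : Prop :=
  ∃ a b : List A, 3 ≤ a.length ∧ 3 ≤ b.length ∧ (∀ x ∈ a, x ∈ R) ∧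
    IsQuiddity R b ∧ TupEquiv c (oplus a b)

/-- An irreducible λ-quiddity over `R`: a λ-quiddity of size `≥ 3` which is not reducible. -/
def IrreducibleQuiddity {A : Type*} [CommRing A] (R : Set A) (c : List A) : Prop :=
  IsQuiddity R c ∧ 3 ≤ c.length ∧ ¬ IsReducible R c

/-- The continuant `K_i(a₁,…,a_i)`, determinant of the tridiagonal matrix with diagonal
`a₁,…,a_i` and off-diagonal entries `1`; `K₀ = 1`. -/
def cont {A : Type*} [CommRing A] : List A → A
  | [] => 1
  | [a] => a
  | a :: b :: l => a * cont (b :: l) - cont l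

section Aux

variable {A : Type*} [CommRing A]

lemma mProd_nil : mProd ([] : List A) = 1 := rfl

lemma mProd_cons (x : A) (t : List A) : mProd (x :: t) = mProd t * mMat x := by
  simp [mProd]

lemma mProd_append (s t : List A) : mProd (s ++ t) = mProd t * mProd s := by
  simp [mProd]

lemma mProd_singleton (x : A) : mProd [x] = mMat x := by simp [mProd]

lemma det_mMat (a : A) : (mMat a).det = 1 := by simp [mMat]

lemma det_mProd (l : List A) : (mProd l).det = 1 := by
  induction l with
  | nil => simp [mProd_nil]
  | cons x t ih => rw [mProd_cons, Matrix.det_mul, ih, det_mMat, one_mul]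

/-- Explicit inverse of a determinant-one `2 × 2` matrix. -/
def inv2 (P : Matrix (Fin 2) (Fin 2) A) : Matrix (Fin 2) (Fin 2) A :=
  !![P 1 1, -P 0 1; -P 1 0, P 0 0]

lemma mul_inv2 (P : Matrix (Fin 2) (Fin 2) A) (h : P.det = 1) : P * inv2 P = 1 := by
  rw [Matrix.det_fin_two] at h
  ext i j
  fin_cases i <;> fin_cases j <;>
    simp [inv2, Matrix.mul_apply, Fin.sum_univ_two, Matrix.one_apply] <;>
    first | (linear_combination h) | (linear_combination -h) | ring

lemma inv2_mul (P : Matrix (Fin 2) (Fin 2) A) (h : P.det = 1) : inv2 P * P = 1 := by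
  rw [Matrix.det_fin_two] at h
  ext i j
  fin_cases i <;> fin_cases j <;>
    simp [inv2, Matrix.mul_apply, Fin.sum_univ_two, Matrix.one_apply] <;>
    first | (linear_combination h) | (linear_combination -h) | ring

lemma exists_decomp {l : List A} (h : 2 ≤ l.length) :
    ∃ x m y, l = x :: m ++ [y] ∧ m.length + 2 = l.length := by
  obtain ⟨x, t, rfl⟩ : ∃ x t, l = x :: t := by
    cases l with
    | nil => simp at h
    | cons a t => exact ⟨a, t, rfl⟩
  obtain ⟨m, y, rfl⟩ : ∃ m y, t = m ++ [y] := by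
    rcases List.eq_nil_or_concat t with rfl | ⟨m, y, rfl⟩
    · simp at h
    · exact ⟨m, y, by simp⟩
  exact ⟨x, m, y, by simp, by simp⟩

lemma headD_shape (x y : A) (m : List A) : (x :: m ++ [y]).headD 0 = x := rfl

lemma getLastD_shape (x y : A) (m : List A) : (x :: m ++ [y]).getLastD 0 = y := by
  have : x :: m ++ [y] = (x :: m) ++ [y] := by simp
  rw [this, List.getLastD_eq_getLast?, List.getLast?_concat]
  rfl

lemma dropLast_tail_shape (x y : A) (m : List A) : (x :: m ++ [y]).dropLast.tail = m := by
  have : x :: m ++ [y] = (x :: m) ++ [y] := by simp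
  rw [this, List.dropLast_concat]
  rfl

lemma oplus_shape (x z u v : A) (mid w : List A) :
    oplus (x :: mid ++ [z]) (u :: w ++ [v]) = (x + v) :: mid ++ (z + u) :: w := by
  rw [oplus, headD_shape, getLastD_shape, dropLast_tail_shape,
    headD_shape, getLastD_shape, dropLast_tail_shape]
  simp

lemma oplus_length (a b : List A) (ha : 2 ≤ a.length) (hb : 2 ≤ b.length) :
    (oplus a b).length = a.length + b.length - 2 := by
  simp [oplus]
  omega

lemma key_mat' (M : Matrix (Fin 2) (Fin 2) A) (σ : A) (h1 : σ * σ = 1)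
    (h0 : M 0 0 = σ) (h2 : σ * M 1 1 - M 0 1 * M 1 0 = 1) :
    mMat (σ * M 1 0) * M * mMat (-(σ * M 0 1)) = !![-σ, 0; 0, -σ] := by
  have hs : M 1 1 = σ + σ * (M 0 1 * M 1 0) := by
    calc M 1 1 = (σ * σ) * M 1 1 := by rw [h1, one_mul]
    _ = σ * (σ * M 1 1) := by ring
    _ = σ * (1 + M 0 1 * M 1 0) := by
        rw [show σ * M 1 1 = 1 + M 0 1 * M 1 0 by linear_combination h2]
    _ = σ + σ * (M 0 1 * M 1 0) := by ring
  ext i j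
  fin_cases i <;> fin_cases j <;>
    simp [mMat, Matrix.mul_apply, Fin.sum_univ_two, Matrix.vecMul, dotProduct, h0, hs] <;>
    first
    | (linear_combination (-(σ * (M 1 0) * (M 0 1))) * h1)
    | (linear_combination (-(M 1 0)) * h1)
    | (linear_combination (-(M 0 1)) * h1)
    | ring

lemma neg_one_fin_two : (-1 : Matrix (Fin 2) (Fin 2) A) = !![-1, 0; 0, -1] := by
  ext i j; fin_cases i <;> fin_cases j <;> simp [Matrix.one_apply]

lemma one_fin_two' : (1 : Matrix (Fin 2) (Fin 2) A) = !![1, 0; 0, 1] := by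
  ext i j; fin_cases i <;> fin_cases j <;> simp [Matrix.one_apply]

lemma red_lemma {c : List A} (hq : IsQuiddity Set.univ c) (u w v : List A)
    (hc : c = u ++ w ++ v) (hw : w ≠ []) (huv : 3 ≤ u.length + v.length)
    (σ : A) (hσ : σ = 1 ∨ σ = -1) (h00 : mProd w 0 0 = σ) :
    IsReducible Set.univ c := by
  have hσ2 : σ * σ = 1 := by rcases hσ with rfl | rfl <;> ring
  have hdet : σ * mProd w 1 1 - mProd w 0 1 * mProd w 1 0 = 1 := by
    have := det_mProd w
    rw [Matrix.det_fin_two, h00] at this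
    linear_combination this
  have hp2 : 2 ≤ (v ++ u).length := by simp; omega
  obtain ⟨e, mid, z, hpe, hplen⟩ := exists_decomp hp2
  refine ⟨(e - σ * mProd w 1 0) :: mid ++ [z + σ * mProd w 0 1],
    (-(σ * mProd w 0 1)) :: w ++ [σ * mProd w 1 0], ?_, ?_,
    fun x _ => Set.mem_univ x, ⟨fun x _ => Set.mem_univ x, ?_⟩, ?_⟩
  · simp at hplen ⊢; omega
  · have := List.length_pos_iff.mpr hw; simp; omega
  · have hmb : mProd ((-(σ * mProd w 0 1)) :: w ++ [σ * mProd w 1 0])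
        = mMat (σ * mProd w 1 0) * mProd w * mMat (-(σ * mProd w 0 1)) := by
      rw [mProd_append, mProd_singleton, mProd_cons, mul_assoc]
    rw [hmb, key_mat' (mProd w) σ hσ2 h00 hdet]
    rcases hσ with rfl | rfl
    · right; rw [neg_one_fin_two]
    · left; rw [one_fin_two']; norm_num
  · left
    refine ⟨u.length + w.length, ?_⟩
    have hrot : c.rotate (u.length + w.length) = (v ++ u) ++ w := by
      have hlen : u.length + w.length ≤ c.length := by simp [hc]
      rw [List.rotate_eq_drop_append_take hlen, hc]
      rw [show u ++ w ++ v = (u ++ w) ++ v by simp]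
      rw [List.drop_append_of_le_length (by simp), List.take_append_of_le_length (by simp)]
      simp
    rw [hrot, hpe, oplus_shape]
    rw [show e - σ * mProd w 1 0 + σ * mProd w 1 0 = e by ring,
      show z + σ * mProd w 0 1 + -(σ * mProd w 0 1) = z by ring]
    simp

lemma rotate_replicate (x : A) (N k : ℕ) :
    (List.replicate N x).rotate k = List.replicate N x := by
  apply List.eq_replicate_iff.mpr
  refine ⟨by simp, fun b hb => ?_⟩
  exact List.eq_of_mem_replicate (List.mem_rotate.mp hb)

lemma segment_of_reducible_replicate {x : A} {N : ℕ}
    (h : IsReducible Set.univ (List.replicate N x)) :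
    ∃ g, 1 ≤ g ∧ g + 3 ≤ N ∧
      (mProd (List.replicate g x) 0 0 = 1 ∨ mProd (List.replicate g x) 0 0 = -1) := by
  obtain ⟨a, b, ha3, hb3, -, hqb, hte⟩ := h
  have hoab : oplus a b = List.replicate N x := by
    rcases hte with ⟨k, hk⟩ | ⟨k, hk⟩
    · rw [hk, rotate_replicate]
    · rw [hk, List.reverse_replicate, rotate_replicate]
  obtain ⟨y0, m, y1, hbe, hblen⟩ := exists_decomp (le_trans (by norm_num) hb3)
  have hmx : ∀ e ∈ m, e = x := by
    intro e he
    have : e ∈ oplus a b := by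
      rw [hbe] at hoab ⊢
      rw [oplus]
      have : (y0 :: m ++ [y1]).dropLast.tail = m := dropLast_tail_shape _ _ _
      rw [this]
      simp [he]
    rw [hoab] at this
    exact List.eq_of_mem_replicate this
  have hmrep : m = List.replicate m.length x := List.eq_replicate_iff.mpr ⟨rfl, hmx⟩
  refine ⟨m.length, ?_, ?_, ?_⟩
  · omega
  · have := oplus_length a b (by omega) (by omega)
    rw [hoab] at this
    simp at this
    omega
  · have hmb : mProd b = mMat y1 * mProd m * mMat y0 := by
      rw [hbe, mProd_append, mProd_singleton, mProd_cons, mul_assoc]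
    have hm : mProd m = inv2 (mMat y1) * mProd b * inv2 (mMat y0) := by
      rw [hmb]
      symm
      calc inv2 (mMat y1) * (mMat y1 * mProd m * mMat y0) * inv2 (mMat y0)
          = (inv2 (mMat y1) * mMat y1) * mProd m * (mMat y0 * inv2 (mMat y0)) := by
            noncomm_ring
        _ = mProd m := by rw [inv2_mul _ (det_mMat y1), mul_inv2 _ (det_mMat y0)]; simp
    rw [← hmrep]
    rcases hqb.2 with hq | hq
    · right
      rw [hm, hq]
      simp [inv2, mMat, Matrix.mul_apply, Fin.sum_univ_two, Matrix.vecMul, dotProduct]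
    · left
      rw [hm, hq]
      simp [inv2, mMat, Matrix.mul_apply, Fin.sum_univ_two, Matrix.vecMul, dotProduct]

lemma mProd_replicate_two (k : ℕ) :
    mProd (List.replicate k (2:A)) = !![(k:A)+1, -(k:A); (k:A), 1-(k:A)] := by
  induction k with
  | zero => rw [List.replicate_zero, mProd_nil, one_fin_two']; norm_num
  | succ n ih =>
    rw [List.replicate_succ, mProd_cons, ih]
    ext i j
    fin_cases i <;> fin_cases j <;>
      simp [mMat, Matrix.mul_apply, Fin.sum_univ_two, Matrix.vecMul, dotProduct] <;>
      push_cast <;> ring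

lemma mProd_pair_zero : mProd ([0, 0] : List A) = -1 := by
  rw [show ([0,0] : List A) = 0 :: [0] from rfl, mProd_cons,
    show ([0] : List A) = 0 :: [] from rfl, mProd_cons, mProd_nil, one_mul]
  ext i j
  fin_cases i <;> fin_cases j <;>
    simp [mMat, Matrix.mul_apply, Fin.sum_univ_two, Matrix.vecMul, dotProduct,
      Matrix.one_apply]

lemma mProd_replicate_zero_four : mProd (List.replicate 4 (0:A)) = 1 := by
  rw [show List.replicate 4 (0:A) = [0,0] ++ [0,0] from rfl, mProd_append, mProd_pair_zero]
  simp

lemma existence_part [Fintype A] [Nontrivial A] (hchar : ringChar A ≠ 2) :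
    ∃ c : List A, IrreducibleQuiddity Set.univ c ∧ max 4 (ringChar A) ≤ c.length := by
  have hcharP : CharP A (ringChar A) := ringChar.charP A
  have hm0 : ringChar A ≠ 0 := CharP.char_ne_zero_of_finite A (ringChar A)
  by_cases hm4 : ringChar A ≤ 4
  · refine ⟨List.replicate 4 0, ⟨⟨fun x _ => Set.mem_univ x, Or.inl mProd_replicate_zero_four⟩,
      by simp, ?_⟩, by simp [hm4]⟩
    intro hred
    obtain ⟨g, hg1, hg3, hent⟩ := segment_of_reducible_replicate hred
    have hg : g = 1 := by omega
    subst hg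
    have h1 : mProd (List.replicate 1 (0:A)) 0 0 = 0 := by
      rw [show List.replicate 1 (0:A) = 0 :: [] from rfl, mProd_cons, mProd_nil, one_mul]
      simp [mMat]
    rw [h1] at hent
    rcases hent with h | h
    · exact zero_ne_one h
    · exact zero_ne_one (by linear_combination -h : (0:A) = 1)
  · push_neg at hm4
    have hmcast : ((ringChar A : ℕ) : A) = 0 := CharP.cast_eq_zero A (ringChar A)
    refine ⟨List.replicate (ringChar A) 2, ⟨⟨fun x _ => Set.mem_univ x, Or.inl ?_⟩,
      by simp; omega, ?_⟩, by simp; omega⟩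
    · rw [mProd_replicate_two, hmcast, one_fin_two']
      norm_num
    · intro hred
      obtain ⟨g, hg1, hg3, hent⟩ := segment_of_reducible_replicate hred
      rw [mProd_replicate_two] at hent
      simp at hent
      rcases hent with h | h
      · have : ((g : ℕ) : A) = 0 := by linear_combination h
        have := (CharP.cast_eq_zero_iff A (ringChar A) g).mp this
        have := Nat.le_of_dvd (by omega) this
        omega
      · have : (((g + 2 : ℕ)) : A) = 0 := by push_cast; linear_combination h
        have := (CharP.cast_eq_zero_iff A (ringChar A) (g+2)).mp this
        have := Nat.le_of_dvd (by omega) this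
        omega

lemma charTwoNeZero [Fintype A] [Nontrivial A] (hchar : ringChar A ≠ 2) : (2:A) ≠ 0 := by
  intro h2
  have : ((2:ℕ):A) = 0 := by push_cast; exact h2
  have hdvd := (CharP.cast_eq_zero_iff A (ringChar A) 2).mp this
  have hm0 : ringChar A ≠ 0 := CharP.char_ne_zero_of_finite A (ringChar A)
  have hm1 : ringChar A ≠ 1 := CharP.ringChar_ne_one
  have := Nat.le_of_dvd (by omega) hdvd
  interval_cases h : ringChar A <;> simp_all

lemma upper_part [Fintype A] [Nontrivial A] (hchar : ringChar A ≠ 2)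
    (c : List A) (hirr : IrreducibleQuiddity Set.univ c) :
    c.length ≤ Nat.card (Matrix.SpecialLinearGroup (Fin 2) A) / (2 * Nat.card A) + 2 := by
  classical
  set S := Nat.card (Matrix.SpecialLinearGroup (Fin 2) A) with hS
  set B := S / (2 * Nat.card A) with hB
  by_contra hN
  push_neg at hN
  have hN3 : B + 3 ≤ c.length := hN
  have h2A : (2:A) ≠ 0 := charTwoNeZero hchar
  set P : ℕ → Matrix (Fin 2) (Fin 2) A := fun i => mProd (c.take i) with hP
  have hdetP : ∀ i, (P i).det = 1 := fun i => det_mProd _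
  set uvec : Fin (B+1) → (Fin 2 → A) := fun i r => inv2 (P i) r 0 with huvec
  by_cases hcol : ∃ i j : Fin (B+1), i < j ∧ (uvec j = uvec i ∨ uvec j = -uvec i)
  · -- collision: reducibility, contradiction
    obtain ⟨i, j, hij, hor⟩ := hcol
    set w : List A := (c.drop (i:ℕ)).take ((j:ℕ) - (i:ℕ)) with hw
    have hijn : (i:ℕ) < (j:ℕ) := hij
    have hjB : (j:ℕ) ≤ B := by have := j.isLt; omega
    have hjN : (j:ℕ) ≤ c.length := by omega
    have htake : c.take (j:ℕ) = c.take (i:ℕ) ++ w := by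
      rw [hw, ← List.take_add]
      congr 1
      omega
    have hwlen : w.length = (j:ℕ) - (i:ℕ) := by
      rw [hw, List.length_take, List.length_drop]
      omega
    have hPj : mProd w * P (i:ℕ) = P (j:ℕ) := by
      show mProd w * mProd (c.take (i:ℕ)) = mProd (c.take (j:ℕ))
      rw [htake, mProd_append]
    have hmw : mProd w = P (j:ℕ) * inv2 (P (i:ℕ)) := by
      rw [← hPj, mul_assoc, mul_inv2 _ (hdetP _), mul_one]
    have hid00 : P (j:ℕ) 0 0 * uvec j 0 + P (j:ℕ) 0 1 * uvec j 1 = 1 := by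
      have h1 : P (j:ℕ) 0 0 * uvec j 0 + P (j:ℕ) 0 1 * uvec j 1
          = (P (j:ℕ) * inv2 (P (j:ℕ))) 0 0 := by
        rw [Matrix.mul_apply, Fin.sum_univ_two]
      rw [h1, mul_inv2 _ (hdetP _)]
      simp [Matrix.one_apply]
    have hexp : mProd w 0 0
        = P (j:ℕ) 0 0 * uvec i 0 + P (j:ℕ) 0 1 * uvec i 1 := by
      rw [hmw, Matrix.mul_apply, Fin.sum_univ_two]
    have hent : mProd w 0 0 = 1 ∨ mProd w 0 0 = -1 := by
      rcases hor with hu | hu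
      · left
        rw [hexp, ← hu, hid00]
      · right
        have hu' : uvec i = -uvec j := by rw [hu]; simp
        rw [hexp, hu']
        simp only [Pi.neg_apply]
        linear_combination -hid00
    have hcdec : c = c.take (i:ℕ) ++ w ++ c.drop (j:ℕ) := by
      rw [← htake, List.take_append_drop]
    have hwne : w ≠ [] := by
      intro hnil
      rw [hnil] at hwlen
      simp at hwlen
      omega
    have huv : 3 ≤ (c.take (i:ℕ)).length + (c.drop (j:ℕ)).length := by
      rw [List.length_take, List.length_drop]
      omega
    rcases hent with h00 | h00
    · exact hirr.2.2 (red_lemma hirr.1 _ _ _ hcdec hwne huv 1 (Or.inl rfl) h00)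
    · exact hirr.2.2 (red_lemma hirr.1 _ _ _ hcdec hwne huv (-1) (Or.inr rfl) h00)
  · -- no collision: counting
    push_neg at hcol
    set eσ : Bool → A := fun s => if s then 1 else -1 with heσ
    have hesq : ∀ b, eσ b * eσ b = 1 := by intro b; cases b <;> simp [heσ]
    set W : A → Matrix (Fin 2) (Fin 2) A := fun t => !![1, t; 0, 1] with hW
    have hdetW : ∀ t, (W t).det = 1 := by
      intro t; rw [hW]; simp [Matrix.det_fin_two_of]
    have hdetΨ : ∀ (i : Fin (B+1)) (s : Bool) (t : A),
        (eσ s • (W t * P (i:ℕ))).det = 1 := by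
      intro i s t
      rw [Matrix.det_smul, Matrix.det_mul, hdetW, hdetP, Fintype.card_fin]
      cases s <;> simp [heσ]
    set Ψ : Fin (B+1) × Bool × A → Matrix.SpecialLinearGroup (Fin 2) A :=
      fun p => ⟨eσ p.2.1 • (W p.2.2 * P (p.1:ℕ)), hdetΨ p.1 p.2.1 p.2.2⟩ with hΨ
    have hinj : Function.Injective Ψ := by
      rintro ⟨i, s, t⟩ ⟨i', s', t'⟩ hEq
      have E : eσ s • (W t * P (i:ℕ)) = eσ s' • (W t' * P (i':ℕ)) :=
        congrArg Subtype.val hEq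
      have E1 : eσ s • W t = eσ s' • (W t' * (P (i':ℕ) * inv2 (P (i:ℕ)))) := by
        calc eσ s • W t = eσ s • (W t * (P (i:ℕ) * inv2 (P (i:ℕ)))) := by
              rw [mul_inv2 _ (hdetP _), mul_one]
          _ = (eσ s • (W t * P (i:ℕ))) * inv2 (P (i:ℕ)) := by
              rw [Matrix.smul_mul, mul_assoc]
          _ = (eσ s' • (W t' * P (i':ℕ))) * inv2 (P (i:ℕ)) := by rw [E]
          _ = eσ s' • (W t' * (P (i':ℕ) * inv2 (P (i:ℕ)))) := by
              rw [Matrix.smul_mul, mul_assoc]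
      set R := P (i':ℕ) * inv2 (P (i:ℕ)) with hR
      have e10 : (0:A) = eσ s' * R 1 0 := by
        have h := congrFun (congrFun E1 1) 0
        simp only [Matrix.smul_apply, smul_eq_mul, Matrix.mul_apply, Fin.sum_univ_two, hW] at h
        simpa using h
      have hR10 : R 1 0 = 0 := by
        calc R 1 0 = (eσ s' * eσ s') * R 1 0 := by rw [hesq, one_mul]
          _ = eσ s' * (eσ s' * R 1 0) := by ring
          _ = 0 := by rw [← e10, mul_zero]
      have e00 : eσ s = eσ s' * R 0 0 := by
        have h := congrFun (congrFun E1 0) 0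
        simp only [Matrix.smul_apply, smul_eq_mul, Matrix.mul_apply, Fin.sum_univ_two, hW] at h
        simp only [hR10] at h
        simpa using h
      have hR00 : R 0 0 = eσ s' * eσ s := by
        calc R 0 0 = (eσ s' * eσ s') * R 0 0 := by rw [hesq, one_mul]
          _ = eσ s' * (eσ s' * R 0 0) := by ring
          _ = eσ s' * eσ s := by rw [← e00]
      have hinv : inv2 (P (i:ℕ)) = inv2 (P (i':ℕ)) * R := by
        rw [hR, ← mul_assoc, inv2_mul _ (hdetP _), one_mul]
      have huu : ∀ r, uvec i r = (eσ s' * eσ s) * uvec i' r := by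
        intro r
        have h := congrFun (congrFun hinv r) 0
        rw [Matrix.mul_apply, Fin.sum_univ_two, hR10, hR00] at h
        show inv2 (P (i:ℕ)) r 0 = (eσ s' * eσ s) * inv2 (P (i':ℕ)) r 0
        rw [h]
        ring
      have hδ : eσ s' * eσ s = 1 ∨ eσ s' * eσ s = -1 := by
        cases s <;> cases s' <;> simp [heσ]
      have hii : i = i' := by
        by_contra hne
        rcases lt_or_gt_of_ne hne with hlt | hlt
        · rcases hδ with hδ1 | hδ1
          · exact (hcol i i' hlt).1 (funext fun r => by
              have := huu r; rw [hδ1, one_mul] at this; exact this.symm)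
          · exact (hcol i i' hlt).2 (funext fun r => by
              simp only [Pi.neg_apply]
              have := huu r; rw [hδ1] at this; linear_combination this)
        · rcases hδ with hδ1 | hδ1
          · exact (hcol i' i hlt).1 (funext fun r => by
              rw [huu r, hδ1, one_mul])
          · exact (hcol i' i hlt).2 (funext fun r => by
              simp only [Pi.neg_apply]
              rw [huu r, hδ1]; ring)
      subst hii
      have hRone : R = 1 := by rw [hR, mul_inv2 _ (hdetP _)]
      have h1' : eσ s' * eσ s = 1 := by
        rw [← hR00, hRone]
        rfl
      have hss : eσ s = eσ s' := by
        calc eσ s = (eσ s' * eσ s') * eσ s := by rw [hesq, one_mul]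
          _ = eσ s' * (eσ s' * eσ s) := by ring
          _ = eσ s' := by rw [h1', mul_one]
      have hs : s = s' := by
        cases s <;> cases s'
        · rfl
        · have h' : (-1:A) = 1 := by simpa [heσ] using hss
          exact absurd (by linear_combination -h' : (2:A) = 0) h2A
        · have h' : (1:A) = -1 := by simpa [heσ] using hss
          exact absurd (by linear_combination h' : (2:A) = 0) h2A
        · rfl
      subst hs
      have ht : t = t' := by
        have h0 := congrFun (congrFun E1 0) 1
        rw [hRone, mul_one] at h0
        have h : eσ s * t = eσ s * t' := by
          simpa [hW, Matrix.smul_apply] using h0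
        calc t = (eσ s * eσ s) * t := by rw [hesq, one_mul]
          _ = eσ s * (eσ s * t) := by ring
          _ = eσ s * (eσ s * t') := by rw [h]
          _ = (eσ s * eσ s) * t' := by ring
          _ = t' := by rw [hesq, one_mul]
      rw [ht]
    have hcard : (B + 1) * (2 * Nat.card A) ≤ S := by
      have h1 := Nat.card_le_card_of_injective Ψ hinj
      have h2 : Nat.card (Fin (B+1) × Bool × A) = (B + 1) * (2 * Nat.card A) := by
        rw [Nat.card_prod, Nat.card_prod]
        simp [Nat.card_eq_fintype_card]
      rw [h2] at h1
      exact h1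
    have hApos : 0 < Nat.card A := Nat.card_pos
    have : B + 1 ≤ B := by
      rw [hB]
      exact (Nat.le_div_iff_mul_le (by omega)).mpr hcard
    omega

end Aux

/-- Over a finite nontrivial commutative ring of characteristic different from 2, there is an
irreducible λ-quiddity of size at least `max 4 (car A)` and every irreducible λ-quiddity has
size at most `|SL₂(A)|/(2|A|) + 2`. -/
theorem stmt2 {A : Type*} [CommRing A] [Fintype A] [Nontrivial A]
    (hchar : ringChar A ≠ 2) :
    (∃ c : List A, IrreducibleQuiddity Set.univ c ∧ max 4 (ringChar A) ≤ c.length) ∧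
    (∀ c : List A, IrreducibleQuiddity Set.univ c →
      c.length ≤ Nat.card (Matrix.SpecialLinearGroup (Fin 2) A) / (2 * Nat.card A) + 2) := by
  exact ⟨existence_part hchar, fun c hc => upper_part hchar c hc⟩
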